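/- For a > 0 and x ∈ ℝ³ with x ≠ 0, the solution of −Δf + a²f = e^{−|x|²} in ℝ³ is given by f(x) = (√π/8) · (e^{−|x|²}/|x|) · [w(i(a/2 − |x|)) − w(i(a/2 + |x|))], where w(z) = e^{−z²} erfc(−iz) is the scaled complementary error function (Faddeeva function). -/

import Mathlib

open Real MeasureTheory

/-- The Gauss error function `erf(t) = (2/√π) ∫_0^t e^(-s²) ds`. -/
noncomputable def erf (t : ℝ) : ℝ :=
  (2 / Real.sqrt π) * ∫ s in (0:ℝ)..t, Real.exp (-s ^ 2)

/-- The complementary error function. -/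
noncomputable def erfc (t : ℝ) : ℝ := 1 - erf t

/-- The Faddeeva (scaled complementary error) function evaluated at `i s`, `s` real:
`w(i s) = e^(s²) erfc(s)`. -/
noncomputable def wofzI (s : ℝ) : ℝ := Real.exp (s ^ 2) * erfc s

/-- The Laplacian on `ℝⁿ` as the sum of second derivatives along coordinate directions. -/
noncomputable def laplacian {n : ℕ} (f : EuclideanSpace ℝ (Fin n) → ℝ)
    (x : EuclideanSpace ℝ (Fin n)) : ℝ :=
  ∑ i : Fin n, iteratedDeriv 2 (fun t : ℝ => f (x + t • EuclideanSpace.single i (1:ℝ))) 0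

lemma hasDerivAt_erf (t : ℝ) :
    HasDerivAt erf (2 / Real.sqrt π * Real.exp (-t ^ 2)) t := by
  have hc : Continuous fun s : ℝ => Real.exp (-s ^ 2) := by continuity
  have h := (intervalIntegral.integral_hasStrictDerivAt_right
    (hc.intervalIntegrable 0 t) (hc.stronglyMeasurableAtFilter _ _)
    hc.continuousAt).hasDerivAt
  exact (h.const_mul (2 / Real.sqrt π))

lemma hasDerivAt_wofzI (s : ℝ) :
    HasDerivAt wofzI (2 * s * wofzI s - 2 / Real.sqrt π) s := by
  have he : HasDerivAt (fun u : ℝ => Real.exp (u ^ 2)) (2 * s * Real.exp (s ^ 2)) s := by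
    have := (Real.hasDerivAt_exp (s ^ 2)).comp s
      ((hasDerivAt_pow 2 s))
    exact this.congr_deriv (by simp only [Nat.cast_ofNat, Nat.reduceSub, pow_one]; ring)
  have hec : HasDerivAt erfc (-(2 / Real.sqrt π * Real.exp (-s ^ 2))) s := by
    exact ((hasDerivAt_erf s).const_sub 1)
  have := he.mul hec
  refine this.congr_deriv ?_
  have hx : Real.exp (s ^ 2) * Real.exp (-s ^ 2) = 1 := by
    rw [← Real.exp_add]; simp
  simp only [wofzI]
  linear_combination -(2 / Real.sqrt π) * hx

lemma hasDerivAt_E (r : ℝ) :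
    HasDerivAt (fun u : ℝ => Real.exp (-u ^ 2)) (-2 * r * Real.exp (-r ^ 2)) r := by
  have h1 : HasDerivAt (fun u : ℝ => -u ^ 2) (-(2 * r ^ 1)) r := (hasDerivAt_pow 2 r).neg
  have := (Real.hasDerivAt_exp (-r ^ 2)).comp r h1
  refine this.congr_deriv ?_
  ring

lemma hasDerivAt_A (r : ℝ) (hr : 0 < r) :
    HasDerivAt (fun u : ℝ => Real.exp (-u ^ 2) / u)
      (-Real.exp (-r ^ 2) * (2 * r ^ 2 + 1) / r ^ 2) r := by
  have := (hasDerivAt_E r).div (hasDerivAt_id r) hr.ne'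
  refine this.congr_deriv ?_
  simp only [id]
  field_simp
  ring

lemma hasDerivAt_A' (r : ℝ) (hr : 0 < r) :
    HasDerivAt (fun u : ℝ => -Real.exp (-u ^ 2) * (2 * u ^ 2 + 1) / u ^ 2)
      (Real.exp (-r ^ 2) * (4 * r ^ 4 + 2 * r ^ 2 + 2) / r ^ 3) r := by
  have hu : HasDerivAt (fun u : ℝ => -Real.exp (-u ^ 2) * (2 * u ^ 2 + 1))
      (-(-2 * r * Real.exp (-r ^ 2)) * (2 * r ^ 2 + 1) +
        (-Real.exp (-r ^ 2)) * (2 * (2 * r ^ 1))) r := by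
    have := ((hasDerivAt_E r).neg.mul (((hasDerivAt_pow 2 r).const_mul 2).add_const 1))
    exact this
  have hd : HasDerivAt (fun u : ℝ => u ^ 2) (2 * r ^ 1) r := hasDerivAt_pow 2 r
  have := hu.div hd (by positivity)
  refine this.congr_deriv ?_
  field_simp
  ring

lemma hasDerivAt_B (a r : ℝ) :
    HasDerivAt (fun u : ℝ => wofzI (a / 2 - u) - wofzI (a / 2 + u))
      (-((a - 2 * r) * wofzI (a / 2 - r)) - (a + 2 * r) * wofzI (a / 2 + r)
        + 4 / Real.sqrt π) r := by
  have hm : HasDerivAt (fun u : ℝ => wofzI (a / 2 - u))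
      (-(2 * (a / 2 - r) * wofzI (a / 2 - r) - 2 / Real.sqrt π)) r := by
    have h1 : HasDerivAt (fun u : ℝ => a / 2 - u) (-1) r := by
      simpa using (hasDerivAt_id r).const_sub (a / 2)
    have := (hasDerivAt_wofzI (a / 2 - r)).comp r h1
    refine this.congr_deriv ?_; ring
  have hp : HasDerivAt (fun u : ℝ => wofzI (a / 2 + u))
      (2 * (a / 2 + r) * wofzI (a / 2 + r) - 2 / Real.sqrt π) r := by
    have h1 : HasDerivAt (fun u : ℝ => a / 2 + u) 1 r := by
      simpa using (hasDerivAt_id r).const_add (a / 2)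
    have := (hasDerivAt_wofzI (a / 2 + r)).comp r h1
    refine this.congr_deriv ?_; ring
  have := hm.sub hp
  refine this.congr_deriv ?_
  ring

lemma hasDerivAt_B' (a r : ℝ) :
    HasDerivAt (fun u : ℝ => -((a - 2 * u) * wofzI (a / 2 - u))
        - (a + 2 * u) * wofzI (a / 2 + u) + 4 / Real.sqrt π)
      ((2 + (a - 2 * r) ^ 2) * wofzI (a / 2 - r)
        - (2 + (a + 2 * r) ^ 2) * wofzI (a / 2 + r) + 8 * r / Real.sqrt π) r := by
  have hm : HasDerivAt (fun u : ℝ => wofzI (a / 2 - u))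
      (-(2 * (a / 2 - r) * wofzI (a / 2 - r) - 2 / Real.sqrt π)) r := by
    have h1 : HasDerivAt (fun u : ℝ => a / 2 - u) (-1) r := by
      simpa using (hasDerivAt_id r).const_sub (a / 2)
    have := (hasDerivAt_wofzI (a / 2 - r)).comp r h1
    refine this.congr_deriv ?_; ring
  have hp : HasDerivAt (fun u : ℝ => wofzI (a / 2 + u))
      (2 * (a / 2 + r) * wofzI (a / 2 + r) - 2 / Real.sqrt π) r := by
    have h1 : HasDerivAt (fun u : ℝ => a / 2 + u) 1 r := by
      simpa using (hasDerivAt_id r).const_add (a / 2)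
    have := (hasDerivAt_wofzI (a / 2 + r)).comp r h1
    refine this.congr_deriv ?_; ring
  have hlm : HasDerivAt (fun u : ℝ => a - 2 * u) (-2) r := by
    simpa using ((hasDerivAt_id r).const_mul 2).const_sub a
  have hlp : HasDerivAt (fun u : ℝ => a + 2 * u) 2 r := by
    simpa using ((hasDerivAt_id r).const_mul 2).const_add a
  have h1 := (hlm.mul hm).neg
  have h2 := hlp.mul hp
  have := (h1.sub h2).add_const (4 / Real.sqrt π)
  refine this.congr_deriv ?_
  ring

lemma laplacian_radial {g g1 g2 : ℝ → ℝ}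
    (hg : ∀ r : ℝ, 0 < r → HasDerivAt g (g1 r) r)
    (hg1 : ∀ r : ℝ, 0 < r → HasDerivAt g1 (g2 r) r)
    (x : EuclideanSpace ℝ (Fin 3)) (hx : x ≠ 0) :
    laplacian (fun y => g ‖y‖) x = g2 ‖x‖ + 2 / ‖x‖ * g1 ‖x‖ := by
  have hr : 0 < ‖x‖ := norm_pos_iff.mpr hx
  set r : ℝ := ‖x‖ with hrdef
  have hcoord : ∀ i : Fin 3,
      iteratedDeriv 2 (fun t : ℝ => g ‖x + t • EuclideanSpace.single i (1:ℝ)‖) 0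
        = (g2 r / r ^ 2) * (x i) ^ 2 + g1 r / r - (g1 r / r ^ 3) * (x i) ^ 2 := by
    intro i
    set b : ℝ := x i with hbdef
    set q : ℝ → ℝ := fun t => r ^ 2 + 2 * b * t + t ^ 2 with hq
    set n : ℝ → ℝ := fun t => Real.sqrt (q t) with hn
    have hnorm : ∀ t : ℝ, ‖x + t • EuclideanSpace.single i (1:ℝ)‖ = n t := by
      intro t
      have h2 : inner ℝ x (t • EuclideanSpace.single i (1:ℝ)) = t * b := by
        rw [real_inner_smul_right, EuclideanSpace.inner_single_right]
        simp [hbdef, mul_comm]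
      have h1 : ‖x + t • EuclideanSpace.single i (1:ℝ)‖ ^ 2 = q t := by
        rw [norm_add_sq_real, h2, norm_smul, EuclideanSpace.norm_single]
        simp only [hq, norm_one, Real.norm_eq_abs, mul_one]
        rw [sq_abs]; ring
      rw [← Real.sqrt_sq (norm_nonneg (x + t • EuclideanSpace.single i (1:ℝ))), h1]
    -- positivity of q near 0
    have hq0 : q 0 = r ^ 2 := by simp [hq]
    have hqc : Continuous q := by fun_prop
    have hev : ∀ᶠ t in nhds (0:ℝ), 0 < q t :=
      ContinuousAt.eventually_lt continuousAt_const hqc.continuousAt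
        (by rw [hq0]; positivity)
    have hnder : ∀ t : ℝ, 0 < q t → HasDerivAt n ((b + t) / n t) t := by
      intro t ht
      have hqd : HasDerivAt q (2 * b + 2 * t) t := by
        have h1 : HasDerivAt (fun u : ℝ => r ^ 2 + 2 * b * u + u ^ 2)
            (0 + 2 * b * 1 + 2 * t ^ 1) t := by
          exact (((hasDerivAt_const t (r ^ 2)).add
            ((hasDerivAt_id t).const_mul (2 * b))).add (hasDerivAt_pow 2 t))
        simpa [hq] using h1
      have h2 := (Real.hasDerivAt_sqrt (ne_of_gt ht)).comp t hqd
      have hnt : 0 < n t := Real.sqrt_pos.mpr ht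
      refine h2.congr_deriv ?_
      rw [hn]
      field_simp
    have hphi : ∀ t : ℝ, 0 < q t →
        HasDerivAt (fun u => g (n u)) (g1 (n t) * ((b + t) / n t)) t := fun t ht =>
      (hg (n t) (Real.sqrt_pos.mpr ht)).comp t (hnder t ht)
    have hderiv_ev : deriv (fun u => g (n u)) =ᶠ[nhds (0:ℝ)]
        (fun t => g1 (n t) * ((b + t) / n t)) :=
      hev.mono fun t ht => (hphi t ht).deriv
    have hq00 : 0 < q 0 := by rw [hq0]; positivity
    have hn0 : n 0 = r := by
      rw [hn]; simp only [hq0]; exact Real.sqrt_sq hr.le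
    have hnd0 : HasDerivAt n (b / r) 0 := by
      have := hnder 0 hq00
      simpa [hn0] using this
    have hg1n : HasDerivAt (fun t => g1 (n t)) (g2 r * (b / r)) 0 := by
      have := (hg1 (n 0) (by rw [hn0]; exact hr)).comp 0 hnd0
      rw [hn0] at this
      exact this
    have hu : HasDerivAt (fun t => g1 (n t) * (b + t))
        (g2 r * (b / r) * b + g1 r) 0 := by
      have := hg1n.mul ((hasDerivAt_id 0).const_add b)
      exact this.congr_deriv (by simp [hn0])
    have hpsi : HasDerivAt (fun t => g1 (n t) * ((b + t) / n t))
        (((g2 r * (b / r) * b + g1 r) * r - g1 r * b * (b / r)) / r ^ 2) 0 := by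
      have := hu.div hnd0 (by rw [hn0]; exact hr.ne')
      simp only [hn0, mul_div_assoc] at this ⊢
      rw [show (fun t => g1 (n t) * ((b + t) / n t)) = (fun t => g1 (n t) * (b + t)) / n from
        funext fun t => by simp only [Pi.div_apply, mul_div_assoc]]
      simpa using this
    have hfun : (fun t : ℝ => g ‖x + t • EuclideanSpace.single i (1:ℝ)‖)
        = fun t => g (n t) := funext fun t => by rw [hnorm t]
    rw [hfun, show (2:ℕ) = 1 + 1 from rfl, iteratedDeriv_succ, iteratedDeriv_one,
      Filter.EventuallyEq.deriv_eq hderiv_ev, hpsi.deriv]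
    field_simp
    ring
  have hsum : ∑ i : Fin 3, (x i) ^ 2 = r ^ 2 := by
    have h1 := EuclideanSpace.norm_eq x
    rw [← hrdef] at h1
    rw [h1, Real.sq_sqrt (by positivity)]
    simp [Real.norm_eq_abs, sq_abs]
  simp only [laplacian]
  rw [Finset.sum_congr rfl fun i _ => hcoord i]
  rw [Finset.sum_sub_distrib, Finset.sum_add_distrib, ← Finset.mul_sum, ← Finset.mul_sum,
    hsum, Finset.sum_const, Finset.card_univ, Fintype.card_fin, nsmul_eq_mul]
  field_simp
  ring

noncomputable def g1aux (a r : ℝ) : ℝ :=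
  Real.sqrt π / 8 * ((-Real.exp (-r ^ 2) * (2 * r ^ 2 + 1) / r ^ 2) *
      (wofzI (a / 2 - r) - wofzI (a / 2 + r)) +
    (Real.exp (-r ^ 2) / r) * (-((a - 2 * r) * wofzI (a / 2 - r))
      - (a + 2 * r) * wofzI (a / 2 + r) + 4 / Real.sqrt π))

noncomputable def g2aux (a r : ℝ) : ℝ :=
  Real.sqrt π / 8 * ((Real.exp (-r ^ 2) * (4 * r ^ 4 + 2 * r ^ 2 + 2) / r ^ 3) *
      (wofzI (a / 2 - r) - wofzI (a / 2 + r)) +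
    2 * (-Real.exp (-r ^ 2) * (2 * r ^ 2 + 1) / r ^ 2) *
      (-((a - 2 * r) * wofzI (a / 2 - r)) - (a + 2 * r) * wofzI (a / 2 + r)
        + 4 / Real.sqrt π) +
    (Real.exp (-r ^ 2) / r) * ((2 + (a - 2 * r) ^ 2) * wofzI (a / 2 - r)
      - (2 + (a + 2 * r) ^ 2) * wofzI (a / 2 + r) + 8 * r / Real.sqrt π))


theorem yukawa3d_gaussian_solution (a : ℝ) (ha : 0 < a) :
    ∀ x : EuclideanSpace ℝ (Fin 3), x ≠ 0 →
      -laplacian (fun y : EuclideanSpace ℝ (Fin 3) =>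
          (Real.sqrt π / 8) * (Real.exp (-‖y‖ ^ 2) / ‖y‖) *
            (wofzI (a / 2 - ‖y‖) - wofzI (a / 2 + ‖y‖))) x +
        a ^ 2 * ((Real.sqrt π / 8) * (Real.exp (-‖x‖ ^ 2) / ‖x‖) *
            (wofzI (a / 2 - ‖x‖) - wofzI (a / 2 + ‖x‖))) =
      Real.exp (-‖x‖ ^ 2) := by
  intro x hx
  have hr : 0 < ‖x‖ := norm_pos_iff.mpr hx
  have hsπ : (0:ℝ) < Real.sqrt π := Real.sqrt_pos.mpr Real.pi_pos
  have hg : ∀ r : ℝ, 0 < r → HasDerivAt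
      (fun r : ℝ => Real.sqrt π / 8 * (Real.exp (-r ^ 2) / r) *
        (wofzI (a / 2 - r) - wofzI (a / 2 + r))) (g1aux a r) r := by
    intro r hrr
    have := (((hasDerivAt_A r hrr).const_mul (Real.sqrt π / 8)).mul (hasDerivAt_B a r))
    refine this.congr_deriv ?_
    simp only [g1aux]
    ring
  have hg1 : ∀ r : ℝ, 0 < r → HasDerivAt (g1aux a) (g2aux a r) r := by
    intro r hrr
    have h1 := ((hasDerivAt_A' r hrr).mul (hasDerivAt_B a r)).add
      ((hasDerivAt_A r hrr).mul (hasDerivAt_B' a r))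
    have := h1.const_mul (Real.sqrt π / 8)
    refine this.congr_deriv ?_
    simp only [g2aux]
    ring
  have key : laplacian (fun y : EuclideanSpace ℝ (Fin 3) =>
      (Real.sqrt π / 8) * (Real.exp (-‖y‖ ^ 2) / ‖y‖) *
        (wofzI (a / 2 - ‖y‖) - wofzI (a / 2 + ‖y‖))) x
      = g2aux a ‖x‖ + 2 / ‖x‖ * g1aux a ‖x‖ := laplacian_radial hg hg1 x hx
  rw [key]
  simp only [g1aux, g2aux]
  field_simp
  ring
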